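/- Let D := ℝ × ℝ₊ ⊆ ℝ², let b = (b̄, b̃) : ℝ² → ℝ² and let C : ℝ² → S² be continuously differentiable. Then the first-order conditions [for every x ∈ D and every u ∈ N¹_D(x): C(x)u = 0 and ⟨u, b(x) − ½ Σ_{j=1}^2 D(Ce_j)(x)(P_C(x)e_j)⟩ ≤ 0] hold if and only if for every x̄ ∈ ℝ: C(x̄, 0) = C₁₁(x̄, 0)·[[1,0],[0,0]] and b̃(x̄, 0) − ½ 𝟙_{C₁₁(x̄,0) ≠ 0} ∂₁C₁₂(x̄, 0) ≥ 0. -/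

import Mathlib

open Matrix Set Asymptotics
open scoped RealInnerProductSpace NNReal

noncomputable section

/-- `ℝ^d` with the Euclidean inner product and norm. -/
abbrev Vec (d : ℕ) := EuclideanSpace ℝ (Fin d)

/-- real `d × d` matrices. -/
abbrev Mat (d : ℕ) := Matrix (Fin d) (Fin d) ℝ

attribute [local instance] Matrix.normedAddCommGroup Matrix.normedSpace

/-- A matrix acting on a vector of `ℝ^d`. -/
def mv {d : ℕ} (A : Mat d) (u : Vec d) : Vec d := WithLp.toLp 2 (A.mulVec u)

/-- The `j`-th canonical basis vector of `ℝ^d`. -/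
def evec {d : ℕ} (j : Fin d) : Vec d := EuclideanSpace.single j 1

/-- The first-order normal cone `N¹_D(x)`. -/
def normalCone1 {d : ℕ} (D : Set (Vec d)) (x : Vec d) : Set (Vec d) :=
  {u | ∀ ε > (0:ℝ), ∃ δ > (0:ℝ), ∀ y ∈ D, ‖y - x‖ ≤ δ → ⟪u, y - x⟫ ≤ ε * ‖y - x‖}

/-- The second-order normal cone `N²_D(x) ⊆ ℝ^d × S^d`. -/
def normalCone2 {d : ℕ} (D : Set (Vec d)) (x : Vec d) : Set (Vec d × Mat d) :=
  {p | p.2.IsSymm ∧ ∀ ε > (0:ℝ), ∃ δ > (0:ℝ), ∀ y ∈ D, ‖y - x‖ ≤ δ →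
    ⟪p.1, y - x⟫ + (1/2:ℝ) * ⟪y - x, mv p.2 (y - x)⟫ ≤ ε * ‖y - x‖^2}

/-- The first-order normal cone for subsets of `ℝ`. -/
def normalConeR (D : Set ℝ) (x : ℝ) : Set ℝ :=
  {u | ∀ ε > (0:ℝ), ∃ δ > (0:ℝ), ∀ y ∈ D, |y - x| ≤ δ → u * (y - x) ≤ ε * |y - x|}

/-- The matrix of the orthogonal projection of `ℝ^d` onto the column space (range) of `A`,
i.e. `A A⁺` with `A⁺` the Moore–Penrose pseudoinverse. -/
def projRange {d : ℕ} (A : Mat d) : Mat d :=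
  Matrix.toEuclideanLin.symm
    (((LinearMap.range (Matrix.toEuclideanLin A)).subtypeL.comp
      (Submodule.orthogonalProjectionOnto (LinearMap.range (Matrix.toEuclideanLin A)))).toLinearMap)

/-- The element of `ℝ²` with the two given coordinates. -/
def vec2 (a b : ℝ) : Vec 2 := WithLp.toLp 2 ![a, b]

/-- The Hessian matrix of `φ : ℝ^d → ℝ` at `x`. -/
def hessMat {d : ℕ} (φ : Vec d → ℝ) (x : Vec d) : Mat d :=
  Matrix.of fun i j => fderiv ℝ (fun y => fderiv ℝ φ y (evec j)) x (evec i)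

/-! ### Auxiliary lemmas -/

lemma projRange_zero {d : ℕ} : projRange (0 : Mat d) = 0 := by
  have h : (LinearMap.range (Matrix.toEuclideanLin (0 : Mat d))) = ⊥ := by
    simp [map_zero]
  rw [projRange, LinearEquiv.symm_apply_eq]
  ext v
  conv_rhs => rw [map_zero]
  have hm : ((Submodule.orthogonalProjectionOnto (LinearMap.range (Matrix.toEuclideanLin (0 : Mat d))) v : Vec d)) = 0 :=
    (Submodule.mem_bot ℝ).mp (h.le (Submodule.orthogonalProjectionOnto (LinearMap.range (Matrix.toEuclideanLin (0 : Mat d))) v).2)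
  simp [hm]

lemma mat_apply (M : Mat 2) (v : Vec 2) (i : Fin 2) :
    Matrix.toEuclideanLin M v i = M i 0 * v 0 + M i 1 * v 1 := by
  fin_cases i <;> simp [Matrix.toEuclideanLin_apply, Matrix.mulVec, dotProduct, Fin.sum_univ_two]

lemma mv_apply (M : Mat 2) (v : Vec 2) (i : Fin 2) :
    mv M v i = M i 0 * v 0 + M i 1 * v 1 := by
  fin_cases i <;> simp [mv, Matrix.mulVec, dotProduct, Fin.sum_univ_two]

lemma evec_apply (j i : Fin 2) : (evec j : Vec 2) i = if i = j then 1 else 0 := by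
  simp [evec, EuclideanSpace.single_apply]

lemma inner_apply2 (u w : Vec 2) : ⟪u, w⟫ = u 0 * w 0 + u 1 * w 1 := by
  simp [PiLp.inner_apply, RCLike.inner_apply, Fin.sum_univ_two]; ring

lemma projRange_smul (c : ℝ) (hc : c ≠ 0) :
    projRange (c • (!![1,0;0,0] : Mat 2)) = !![1,0;0,0] := by
  set A : Mat 2 := c • !![1,0;0,0] with hA
  set K := LinearMap.range (Matrix.toEuclideanLin A) with hK
  rw [projRange, LinearEquiv.symm_apply_eq]
  ext v i
  have hproj : ((Submodule.orthogonalProjectionOnto K v : Vec 2)) = v 0 • evec 0 := by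
    rw [Submodule.coe_orthogonalProjectionOnto_apply]
    apply Submodule.eq_starProjection_of_mem_orthogonal
    · refine ⟨(c⁻¹ * v 0) • evec 0, ?_⟩
      apply PiLp.ext; intro i
      rw [mat_apply]
      fin_cases i <;>
        simp [hA, evec_apply, PiLp.smul_apply, smul_eq_mul] <;> field_simp
    · intro w hw
      obtain ⟨z, rfl⟩ := hw
      rw [inner_apply2]
      rw [mat_apply, mat_apply]
      fin_cases i <;>
      simp [hA, evec_apply, PiLp.smul_apply, PiLp.sub_apply, smul_eq_mul] <;> ring
  show ((Submodule.orthogonalProjectionOnto K v : Vec 2)) i = _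
  rw [hproj, mat_apply]
  fin_cases i <;> simp [evec_apply, PiLp.smul_apply, smul_eq_mul]

lemma cone_dir {D : Set (Vec 2)} {x u : Vec 2} (hu : u ∈ normalCone1 D x)
    (h : Vec 2) (t0 : ℝ) (ht0 : 0 < t0)
    (hd : ∀ t : ℝ, 0 < t → t ≤ t0 → x + t • h ∈ D) : ⟪u, h⟫ ≤ 0 := by
  by_contra hlt
  push_neg at hlt
  have hh : h ≠ 0 := by rintro rfl; simp at hlt
  have hn : (0:ℝ) < ‖h‖ := norm_pos_iff.mpr hh
  set ε : ℝ := ⟪u, h⟫ / (2 * ‖h‖) with hε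
  have hεpos : 0 < ε := by positivity
  obtain ⟨δ, hδ, hP⟩ := hu ε hεpos
  set t : ℝ := min t0 (δ / ‖h‖) with ht
  have htpos : 0 < t := lt_min ht0 (by positivity)
  have hyD : x + t • h ∈ D := hd t htpos (min_le_left _ _)
  have hsub : (x + t • h) - x = t • h := by abel
  have hnorm : ‖(x + t • h) - x‖ = t * ‖h‖ := by
    rw [hsub, norm_smul, Real.norm_eq_abs, abs_of_pos htpos]
  have hle : ‖(x + t • h) - x‖ ≤ δ := by
    rw [hnorm]
    calc t * ‖h‖ ≤ (δ / ‖h‖) * ‖h‖ := by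
          exact mul_le_mul_of_nonneg_right (min_le_right _ _) hn.le
      _ = δ := by field_simp
  have hnorm' : ‖t • h‖ = t * ‖h‖ := by
    rw [norm_smul, Real.norm_eq_abs, abs_of_pos htpos]
  have := hP _ hyD hle
  rw [hsub, hnorm', real_inner_smul_right] at this
  rw [hε] at this
  have : ⟪u, h⟫ ≤ ⟪u, h⟫ / 2 := by
    have h2 : ⟪u, h⟫ / (2 * ‖h‖) * (t * ‖h‖) = t * (⟪u, h⟫ / 2) := by
      field_simp
    rw [h2] at this
    exact le_of_mul_le_mul_left (by linarith) htpos
  linarith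

lemma inner_evec (u : Vec 2) (j : Fin 2) : ⟪u, (evec j : Vec 2)⟫ = u j := by
  fin_cases j <;> simp [inner_apply2, evec_apply]

lemma cone_boundary {D : Set (Vec 2)} (hD : D = {p : Vec 2 | 0 ≤ p 1})
    {x u : Vec 2} (hx : x 1 = 0) (hu : u ∈ normalCone1 D x) :
    u 0 = 0 ∧ u 1 ≤ 0 := by
  have key : ∀ h : Vec 2, (∀ t : ℝ, 0 < t → 0 ≤ (x + t • h) 1) → ⟪u, h⟫ ≤ 0 := by
    intro h hh
    exact cone_dir hu h 1 one_pos (fun t ht _ => by rw [hD]; exact hh t ht)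
  have h1 : ⟪u, (evec 0 : Vec 2)⟫ ≤ 0 := key _ (by
    intro t ht; simp [PiLp.add_apply, PiLp.smul_apply, evec_apply, hx])
  have h2 : ⟪u, -(evec 0 : Vec 2)⟫ ≤ 0 := key _ (by
    intro t ht; simp [PiLp.add_apply, PiLp.smul_apply, PiLp.neg_apply, evec_apply, hx])
  have h3 : ⟪u, (evec 1 : Vec 2)⟫ ≤ 0 := key _ (by
    intro t ht; simp [PiLp.add_apply, PiLp.smul_apply, evec_apply, hx, ht.le])
  rw [inner_evec] at h1 h3
  rw [inner_neg_right, inner_evec] at h2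
  exact ⟨le_antisymm h1 (by linarith), h3⟩

lemma cone_interior {D : Set (Vec 2)} (hD : D = {p : Vec 2 | 0 ≤ p 1})
    {x u : Vec 2} (hx : 0 < x 1) (hu : u ∈ normalCone1 D x) : u = 0 := by
  have key : ∀ h : Vec 2, (∀ t : ℝ, 0 < t → t ≤ x 1 → 0 ≤ (x + t • h) 1) → ⟪u, h⟫ ≤ 0 := by
    intro h hh
    exact cone_dir hu h (x 1) hx (fun t ht ht' => by rw [hD]; exact hh t ht ht')
  have h1 : ⟪u, (evec 0 : Vec 2)⟫ ≤ 0 := key _ (by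
    intro t ht _; simp [PiLp.add_apply, PiLp.smul_apply, evec_apply, hx.le])
  have h2 : ⟪u, -(evec 0 : Vec 2)⟫ ≤ 0 := key _ (by
    intro t ht _; simp [PiLp.add_apply, PiLp.smul_apply, PiLp.neg_apply, evec_apply, hx.le])
  have h3 : ⟪u, (evec 1 : Vec 2)⟫ ≤ 0 := key _ (by
    intro t ht _; simp [PiLp.add_apply, PiLp.smul_apply, evec_apply]; linarith)
  have h4 : ⟪u, -(evec 1 : Vec 2)⟫ ≤ 0 := key _ (by
    intro t ht ht'; simp only [PiLp.add_apply, PiLp.smul_apply, PiLp.neg_apply, evec_apply,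
      smul_eq_mul]; simp; linarith)
  rw [inner_evec] at h1 h3
  rw [inner_neg_right, inner_evec] at h2 h4
  apply PiLp.ext; intro i
  fin_cases i <;> simp <;> linarith

lemma cone_mem_boundary {D : Set (Vec 2)} (hD : D = {p : Vec 2 | 0 ≤ p 1})
    {x u : Vec 2} (hx : x 1 = 0) (h0 : u 0 = 0) (h1 : u 1 ≤ 0) :
    u ∈ normalCone1 D x := by
  intro ε hε
  refine ⟨1, one_pos, fun y hy _ => ?_⟩
  rw [hD] at hy
  have : ⟪u, y - x⟫ = u 1 * y 1 := by
    rw [inner_apply2, h0]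
    simp [PiLp.sub_apply, hx]
  rw [this]
  have : u 1 * y 1 ≤ 0 := mul_nonpos_of_nonpos_of_nonneg h1 hy
  have hn : 0 ≤ ε * ‖y - x‖ := by positivity
  linarith

def colCLM (j : Fin 2) : Mat 2 →L[ℝ] Vec 2 :=
  LinearMap.toContinuousLinearMap
  { toFun := fun A => mv A (evec j)
    map_add' := fun A B => by
      apply PiLp.ext; intro i; simp [mv_apply, PiLp.add_apply, Matrix.add_apply]; ring
    map_smul' := fun c A => by
      apply PiLp.ext; intro i; simp [mv_apply, PiLp.smul_apply, Matrix.smul_apply,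
        smul_eq_mul]; ring }

lemma diff_mvC {C : Vec 2 → Mat 2} (hC1 : ContDiff ℝ 1 C) (j : Fin 2) :
    Differentiable ℝ (fun y => mv (C y) (evec j)) := by
  have : (fun y => mv (C y) (evec j)) = (colCLM j) ∘ C := rfl
  rw [this]
  exact (colCLM j).differentiable.comp (hC1.differentiable one_ne_zero)

lemma fderiv_mv_entry {C : Vec 2 → Mat 2} (hC1 : ContDiff ℝ 1 C) (x v : Vec 2) (i j : Fin 2) :
    (fderiv ℝ (fun y => mv (C y) (evec j)) x v) i
      = fderiv ℝ (fun y => C y i j) x v := by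
  have hfd : DifferentiableAt ℝ (fun y => mv (C y) (evec j)) x := diff_mvC hC1 j x
  have hcomp := ((EuclideanSpace.proj i (𝕜 := ℝ)).hasFDerivAt.comp x hfd.hasFDerivAt).fderiv
  have heq : ((EuclideanSpace.proj i (𝕜 := ℝ)) ∘ (fun y => mv (C y) (evec j)))
      = fun y => C y i j := by
    funext y
    fin_cases j <;>
      simp [Function.comp_apply, mv_apply, evec_apply]
  rw [heq] at hcomp
  rw [hcomp]
  rfl

lemma mv_zero (v : Vec 2) : mv (0 : Mat 2) v = 0 := by
  apply PiLp.ext; intro i; simp [mv_apply]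

lemma sum_component {C : Vec 2 → Mat 2}
    (hCsymm : ∀ y, (C y).IsSymm) (hC1 : ContDiff ℝ 1 C) (x : Vec 2)
    (hCx : C x = (C x 0 0) • !![1,0;0,0]) :
    (∑ j, fderiv ℝ (fun y => mv (C y) (evec j)) x (mv (projRange (C x)) (evec j))) 1
      = (if C x 0 0 ≠ 0 then (1:ℝ) else 0)
          * fderiv ℝ (fun y => C y 0 1) x (evec 0) := by
  have hswap : (fun y => C y 1 0) = (fun y => C y 0 1) := by
    funext y
    have := congrFun (congrFun (hCsymm y) 0) 1
    simpa [Matrix.transpose_apply] using this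
  by_cases hc : C x 0 0 = 0
  · have hC0 : C x = 0 := by rw [hCx, hc, zero_smul]
    rw [if_neg (by simp [hc]), zero_mul]
    rw [hC0, projRange_zero, Fin.sum_univ_two, mv_zero, map_zero, mv_zero, map_zero]
    simp
  · have hP : projRange (C x) = !![1,0;0,0] := by rw [hCx]; exact projRange_smul _ hc
    rw [hP]
    have hmv0 : mv (!![1,0;0,0] : Mat 2) (evec 0) = evec 0 := by
      apply PiLp.ext; intro i; fin_cases i <;> simp [mv_apply, evec_apply]
    have hmv1 : mv (!![1,0;0,0] : Mat 2) (evec 1) = 0 := by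
      apply PiLp.ext; intro i; fin_cases i <;> simp [mv_apply, evec_apply]
    rw [Fin.sum_univ_two, hmv0, hmv1, map_zero, add_zero]
    rw [fderiv_mv_entry hC1, hswap, if_pos hc, one_mul]

lemma vec2_apply0 (a b : ℝ) : vec2 a b 0 = a := by simp [vec2]
lemma vec2_apply1 (a b : ℝ) : vec2 a b 1 = b := by simp [vec2]

/-- characterization of the first-order conditions on the canonical
state space `D = ℝ × ℝ₊`. -/
theorem stmt8 (b : Vec 2 → Vec 2) (C : Vec 2 → Mat 2) (hCsymm : ∀ y, (C y).IsSymm)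
    (hC1 : ContDiff ℝ 1 C)
    (D : Set (Vec 2)) (hD : D = {p : Vec 2 | 0 ≤ p 1}) :
    (∀ x ∈ D, ∀ u ∈ normalCone1 D x, mv (C x) u = 0 ∧
      ⟪u, b x - (1/2 : ℝ) •
        ∑ j, fderiv ℝ (fun y => mv (C y) (evec j)) x (mv (projRange (C x)) (evec j))⟫ ≤ 0)
    ↔
    (∀ xb : ℝ,
      C (vec2 xb 0) = C (vec2 xb 0) 0 0 • !![1, 0; 0, 0] ∧
      0 ≤ (b (vec2 xb 0)) 1 - (1/2 : ℝ) * (if C (vec2 xb 0) 0 0 ≠ 0 then (1:ℝ) else 0) *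
        fderiv ℝ (fun y => C y 0 1) (vec2 xb 0) (evec 0)) := by
  constructor
  · intro H xb
    set x : Vec 2 := vec2 xb 0 with hxdef
    have hx1 : x 1 = 0 := vec2_apply1 xb 0
    have hxD : x ∈ D := by rw [hD]; exact le_of_eq hx1.symm
    set u : Vec 2 := vec2 0 (-1) with hudef
    have hu : u ∈ normalCone1 D x :=
      cone_mem_boundary hD hx1 (vec2_apply0 0 (-1)) (by rw [hudef, vec2_apply1]; norm_num)
    obtain ⟨h1, h2⟩ := H x hxD u hu
    have hcol : ∀ i : Fin 2, C x i 1 = 0 := by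
      intro i
      have hi := congrArg (fun w : Vec 2 => w i) h1
      simp only [mv_apply] at hi
      rw [hudef, vec2_apply0, vec2_apply1] at hi
      simpa using hi
    have hCxE : C x = C x 0 0 • !![1, 0; 0, 0] := by
      have hsym := congrFun (congrFun (hCsymm x) 0) 1
      simp only [Matrix.transpose_apply] at hsym
      ext i j
      fin_cases i <;> fin_cases j <;>
        simp [Matrix.smul_apply, smul_eq_mul, hcol 0, hcol 1]
      rw [hsym]; exact hcol 0
    refine ⟨hCxE, ?_⟩
    set S : Vec 2 := ∑ j, fderiv ℝ (fun y => mv (C y) (evec j)) x (mv (projRange (C x)) (evec j))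
      with hSdef
    have hinner : ⟪u, b x - (1/2 : ℝ) • S⟫ = -(b x 1 - (1/2 : ℝ) * S 1) := by
      rw [inner_apply2, hudef, vec2_apply0, vec2_apply1]
      simp only [PiLp.sub_apply, PiLp.smul_apply, smul_eq_mul]
      ring
    rw [hinner] at h2
    have hS1 := sum_component hCsymm hC1 x hCxE
    rw [← hSdef] at hS1
    rw [hS1] at h2
    have := neg_nonpos.mp h2
    linarith [this]
  · intro H x hxD u hu
    rw [hD] at hxD
    have hx0 : (0:ℝ) ≤ x 1 := hxD
    rcases eq_or_lt_of_le hx0 with hx1 | hx1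
    · -- boundary case
      have hx1' : x 1 = 0 := hx1.symm
      obtain ⟨hu0, hu1⟩ := cone_boundary hD hx1' hu
      have hxeq : vec2 (x 0) 0 = x := by
        apply PiLp.ext; intro i
        fin_cases i
        · exact vec2_apply0 _ _
        · show vec2 (x 0) 0 1 = x 1
          rw [vec2_apply1]; exact hx1
      obtain ⟨hCxE, hb⟩ := H (x 0)
      rw [hxeq] at hCxE hb
      have hcol : ∀ i : Fin 2, C x i 1 = 0 := by
        intro i
        rw [hCxE]
        fin_cases i <;> simp [Matrix.smul_apply]
      constructor
      · apply PiLp.ext; intro i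
        rw [mv_apply, hu0, hcol i]
        simp
      · have hS1 := sum_component hCsymm hC1 x hCxE
        set S : Vec 2 := ∑ j, fderiv ℝ (fun y => mv (C y) (evec j)) x
          (mv (projRange (C x)) (evec j)) with hSdef
        have hinner : ⟪u, b x - (1/2 : ℝ) • S⟫ = u 1 * (b x 1 - (1/2 : ℝ) * S 1) := by
          rw [inner_apply2, hu0]
          simp only [PiLp.sub_apply, PiLp.smul_apply, smul_eq_mul]
          ring
        rw [hinner]
        apply mul_nonpos_of_nonpos_of_nonneg hu1
        rw [hS1]
        linarith [hb]
    · -- interior case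
      have hu0 : u = 0 := cone_interior hD hx1 hu
      subst hu0
      constructor
      · apply PiLp.ext; intro i
        rw [mv_apply]
        simp
      · rw [inner_zero_left]
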